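/- arXiv:2309.13741 — 2 statements merged into one kernel-verified Lean document; each statement's English description precedes it below -/
import Mathlib

section
/- Let A be a symmetric real n×n matrix whose characteristic polynomial equals ∏_{s=1}^{n}(X − λ_s) for real numbers λ_1,…,λ_n, and let k ≥ 1. Then trace(A^{⊙k}) = Σ_i ∏_{s∈i} λ_s, the sum running over all multisets i of size k over {1,…,n} and each product taken with multiplicity; that is, trace(A^{⊙k}) equals the complete homogeneous symmetric polynomial of degree k evaluated at λ_1,…,λ_n. -/
/-- The set of `k`-tuples over `Fin n` whose underlying multiset is `i`.
Its cardinality is `C(i) = k!/(m_1(i)! ⋯ m_n(i)!)`. -/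
def tuplesOf {n k : ℕ} (i : Sym (Fin n) k) : Finset (Fin k → Fin n) :=
  Finset.univ.filter fun p => (↑(List.ofFn p) : Multiset (Fin n)) = ↑i

/-- The `k`-th symmetric tensor power of an `n × n` real matrix, with rows and columns
indexed by the multisets of size `k` over `{1,…,n}`:
`[A^{⊙k}]_{i,j} = (1/√(C(i)·C(j))) · Σ_{p,q} ∏_ℓ A_{p_ℓ,q_ℓ}`. -/
noncomputable def symPow {n : ℕ} (k : ℕ) (A : Matrix (Fin n) (Fin n) ℝ) :
    Matrix (Sym (Fin n) k) (Sym (Fin n) k) ℝ := fun i j =>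
  (Real.sqrt (((tuplesOf i).card : ℝ) * ((tuplesOf j).card : ℝ)))⁻¹ *
    ∑ p ∈ tuplesOf i, ∑ q ∈ tuplesOf j, ∏ ℓ : Fin k, A (p ℓ) (q ℓ)

namespace SymPowAux

open Finset

variable {n k : ℕ}

lemma mem_tuplesOf {i : Sym (Fin n) k} {p : Fin k → Fin n} :
    p ∈ tuplesOf i ↔ (↑(List.ofFn p) : Multiset (Fin n)) = ↑i := by
  simp [tuplesOf]

/-- Two tuples with the same underlying multiset differ by a permutation. -/
lemma exists_perm_comp {α : Type*} [LinearOrder α] {p q : Fin k → α}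
    (h : (↑(List.ofFn p) : Multiset α) = ↑(List.ofFn q)) :
    ∃ σ : Equiv.Perm (Fin k), p ∘ σ = q := by
  rw [Multiset.coe_eq_coe] at h
  have h1 : List.Perm (List.ofFn (p ∘ Tuple.sort p)) (List.ofFn (q ∘ Tuple.sort q)) :=
    ((Equiv.Perm.ofFn_comp_perm (Tuple.sort p) p).trans h).trans
      (Equiv.Perm.ofFn_comp_perm (Tuple.sort q) q).symm
  have h2 : p ∘ Tuple.sort p = q ∘ Tuple.sort q :=
    List.ofFn_injective (List.Perm.eq_of_sortedLE
      ((Tuple.monotone_sort p).sortedLE_ofFn) ((Tuple.monotone_sort q).sortedLE_ofFn) h1)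
  refine ⟨((Tuple.sort q).symm).trans (Tuple.sort p), funext fun x => ?_⟩
  have h3 := congrFun h2 ((Tuple.sort q).symm x)
  simpa using h3

lemma comp_perm_multiset {α : Type*} (p : Fin k → α) (σ : Equiv.Perm (Fin k)) :
    (↑(List.ofFn (p ∘ σ)) : Multiset α) = ↑(List.ofFn p) :=
  Multiset.coe_eq_coe.2 (Equiv.Perm.ofFn_comp_perm σ p)

/-- The stabilizer (as a finset) of a tuple under the permutation action. -/
def stab (p : Fin k → Fin n) : Finset (Equiv.Perm (Fin k)) :=
  Finset.univ.filter fun σ => p ∘ σ = p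

lemma card_fiber_eq (p q : Fin k → Fin n)
    (hq : (↑(List.ofFn q) : Multiset (Fin n)) = ↑(List.ofFn p)) :
    (Finset.univ.filter fun σ : Equiv.Perm (Fin k) => p ∘ σ = q).card = (stab p).card := by
  obtain ⟨τ, hτ⟩ := exists_perm_comp hq.symm
  refine Finset.card_bij' (fun σ _ => σ * τ⁻¹) (fun σ _ => σ * τ) ?_ ?_ ?_ ?_
  · intro σ hσ
    simp only [mem_filter, mem_univ, true_and] at hσ
    simp only [stab, mem_filter, mem_univ, true_and]
    funext x
    calc p (σ (τ⁻¹ x)) = (p ∘ σ) (τ⁻¹ x) := rfl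
    _ = q (τ⁻¹ x) := by rw [hσ]
    _ = p (τ (τ⁻¹ x)) := (congrFun hτ (τ⁻¹ x)).symm
    _ = p x := by rw [Equiv.Perm.inv_def, Equiv.apply_symm_apply]
  · intro σ hσ
    simp only [stab, mem_filter, mem_univ, true_and] at hσ
    simp only [mem_filter, mem_univ, true_and]
    funext x
    calc p (σ (τ x)) = (p ∘ σ) (τ x) := rfl
    _ = p (τ x) := by rw [hσ]
    _ = q x := congrFun hτ x
  · intro σ _; simp [mul_assoc]
  · intro σ _; simp [mul_assoc]

lemma sum_perm_comp {M : Type*} [AddCommMonoid M] {i : Sym (Fin n) k} {p : Fin k → Fin n}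
    (hp : p ∈ tuplesOf i) (F : (Fin k → Fin n) → M) :
    ∑ σ : Equiv.Perm (Fin k), F (p ∘ σ) = (stab p).card • ∑ q ∈ tuplesOf i, F q := by
  have hmaps : ∀ σ ∈ (Finset.univ : Finset (Equiv.Perm (Fin k))), p ∘ σ ∈ tuplesOf i := by
    intro σ _
    exact mem_tuplesOf.2 ((comp_perm_multiset p σ).trans (mem_tuplesOf.1 hp))
  rw [← Finset.sum_fiberwise_of_maps_to hmaps (fun σ => F (p ∘ σ)), Finset.smul_sum]
  refine Finset.sum_congr rfl fun q hq => ?_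
  rw [Finset.sum_congr rfl (fun σ hσ => ?_), Finset.sum_const,
    card_fiber_eq p q (((mem_tuplesOf.1 hq)).trans (mem_tuplesOf.1 hp).symm)]
  · rw [(Finset.mem_filter.1 hσ).2]

lemma card_tuplesOf_mul_card_stab {i : Sym (Fin n) k} {p : Fin k → Fin n}
    (hp : p ∈ tuplesOf i) :
    (tuplesOf i).card * (stab p).card = (Nat.factorial k) := by
  have h := sum_perm_comp (M := ℕ) hp (fun _ => 1)
  simp only [Finset.sum_const, smul_eq_mul, mul_one, Finset.card_univ,
    Fintype.card_perm, Fintype.card_fin] at h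
  rw [mul_comm]
  exact h.symm

lemma tuplesOf_nonempty (i : Sym (Fin n) k) : (tuplesOf i).Nonempty := by
  obtain ⟨m, hm⟩ := i
  have hl : m.toList.length = k := by rw [Multiset.length_toList, hm]
  subst hl
  refine ⟨fun ℓ => m.toList.get ℓ, mem_tuplesOf.2 ?_⟩
  show ((List.ofFn m.toList.get : List (Fin n)) : Multiset (Fin n)) = m
  rw [List.ofFn_get]
  exact m.coe_toList

/-- The multiset of a tuple, as an element of `Sym`. -/
def symOf (p : Fin k → Fin n) : Sym (Fin n) k :=
  ⟨(↑(List.ofFn p) : Multiset (Fin n)), by simp⟩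

lemma tuplesOf_eq_filter (i : Sym (Fin n) k) :
    tuplesOf i = Finset.univ.filter fun p => symOf p = i := by
  ext p
  simp only [tuplesOf, mem_filter, mem_univ, true_and, symOf]
  constructor
  · intro h; exact (Finset.mem_filter (p := fun p => symOf p = i)).2 ⟨mem_univ _, Sym.coe_injective h⟩
  · intro h; exact congrArg Subtype.val ((Finset.mem_filter (p := fun p => symOf p = i)).1 h).2

lemma sum_partition {M : Type*} [AddCommMonoid M] (F : (Fin k → Fin n) → M) :
    ∑ p : Fin k → Fin n, F p = ∑ i : Sym (Fin n) k, ∑ p ∈ tuplesOf i, F p := by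
  rw [← Finset.sum_fiberwise Finset.univ (fun p => symOf p) F]
  exact Finset.sum_congr rfl fun i _ => by rw [tuplesOf_eq_filter]

/-- The `k`-th tensor power of `B`, twisted by the permutation `σ`. -/
def tpow (σ : Equiv.Perm (Fin k)) (B : Matrix (Fin n) (Fin n) ℝ) :
    Matrix (Fin k → Fin n) (Fin k → Fin n) ℝ :=
  fun p q => ∏ ℓ, B (p ℓ) (q (σ ℓ))

lemma tpow_one_mul (M B : Matrix (Fin n) (Fin n) ℝ) (σ : Equiv.Perm (Fin k)) :
    tpow 1 M * tpow σ B = tpow σ (M * B) := by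
  ext p q
  simp only [tpow, Matrix.mul_apply, Equiv.Perm.one_apply]
  rw [Fintype.prod_sum fun ℓ x => M (p ℓ) x * B x (q (σ ℓ))]
  exact Fintype.sum_congr _ _ fun r => Finset.prod_mul_distrib.symm

lemma tpow_mul_one (B N : Matrix (Fin n) (Fin n) ℝ) (σ : Equiv.Perm (Fin k)) :
    tpow σ B * tpow 1 N = tpow σ (B * N) := by
  ext p q
  simp only [tpow, Matrix.mul_apply, Equiv.Perm.one_apply]
  have h1 : ∀ r : Fin k → Fin n, (∏ ℓ, N (r ℓ) (q ℓ)) = ∏ ℓ, N (r (σ ℓ)) (q (σ ℓ)) :=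
    fun r => (Equiv.prod_comp σ fun ℓ => N (r ℓ) (q ℓ)).symm
  simp_rw [h1, ← Finset.prod_mul_distrib]
  rw [Fintype.prod_sum fun ℓ x => B (p ℓ) x * N x (q (σ ℓ))]
  refine Fintype.sum_bijective (fun r : Fin k → Fin n => r ∘ σ) ?_ _ _ (fun r => rfl)
  constructor
  · intro a b hab
    funext x
    simpa using congrFun hab (σ.symm x)
  · intro g
    exact ⟨g ∘ σ.symm, by funext x; simp⟩

lemma tpow_one_one : tpow (n := n) (k := k) 1 1 = 1 := by
  ext p q
  simp only [tpow, Equiv.Perm.one_apply]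
  by_cases h : p = q
  · subst h
    simp [Matrix.one_apply]
  · rw [Matrix.one_apply_ne h]
    obtain ⟨ℓ, hℓ⟩ := Function.ne_iff.mp h
    exact Finset.prod_eq_zero (Finset.mem_univ ℓ) (Matrix.one_apply_ne hℓ)

lemma trace_tpow (σ : Equiv.Perm (Fin k)) (B : Matrix (Fin n) (Fin n) ℝ) :
    (tpow σ B).trace = ∑ p : Fin k → Fin n, ∏ ℓ, B (p ℓ) (p (σ ℓ)) := rfl

lemma trace_tpow_conj {U D V : Matrix (Fin n) (Fin n) ℝ} (h1 : V * U = 1)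
    (σ : Equiv.Perm (Fin k)) :
    (tpow σ (U * D * V)).trace = (tpow σ D).trace := by
  rw [mul_assoc U D V, ← tpow_one_mul U (D * V) σ, ← tpow_mul_one D V σ,
    Matrix.trace_mul_comm, mul_assoc, tpow_one_mul V U 1, h1, tpow_one_one, mul_one]

lemma card_stab_cast {i : Sym (Fin n) k} {p : Fin k → Fin n} (hp : p ∈ tuplesOf i) :
    ((stab p).card : ℝ) = ((Nat.factorial k) : ℝ) * (((tuplesOf i).card : ℝ))⁻¹ := by
  have h0 : ((tuplesOf i).card : ℝ) ≠ 0 := by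
    have := (tuplesOf_nonempty i).card_pos
    positivity
  rw [eq_mul_inv_iff_mul_eq₀ h0, mul_comm]
  exact_mod_cast congrArg (Nat.cast : ℕ → ℝ) (card_tuplesOf_mul_card_stab hp)

lemma factorial_mul_trace_symPow (B : Matrix (Fin n) (Fin n) ℝ) :
    ((Nat.factorial k) : ℝ) * (symPow k B).trace = ∑ σ : Equiv.Perm (Fin k), (tpow σ B).trace := by
  have hL : (symPow k B).trace = ∑ i : Sym (Fin n) k, (((tuplesOf i).card : ℝ))⁻¹ *
      ∑ p ∈ tuplesOf i, ∑ q ∈ tuplesOf i, ∏ ℓ, B (p ℓ) (q ℓ) := by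
    simp only [Matrix.trace, Matrix.diag, symPow]
    exact Finset.sum_congr rfl fun i _ => by
      rw [Real.sqrt_mul_self (Nat.cast_nonneg _)]
  simp_rw [trace_tpow]
  rw [Finset.sum_comm, sum_partition (fun p => ∑ σ : Equiv.Perm (Fin k), ∏ ℓ,
    B (p ℓ) (p (σ ℓ))), hL, Finset.mul_sum]
  refine Finset.sum_congr rfl fun i _ => ?_
  have hinner : ∀ p ∈ tuplesOf i, (∑ σ : Equiv.Perm (Fin k), ∏ ℓ, B (p ℓ) (p (σ ℓ)))
      = (((Nat.factorial k) : ℝ) * (((tuplesOf i).card : ℝ))⁻¹) * ∑ q ∈ tuplesOf i, ∏ ℓ, B (p ℓ) (q ℓ) := by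
    intro p hp
    have h := sum_perm_comp hp (fun q => ∏ ℓ, B (p ℓ) (q ℓ))
    calc (∑ σ : Equiv.Perm (Fin k), ∏ ℓ, B (p ℓ) (p (σ ℓ)))
        = ∑ σ : Equiv.Perm (Fin k), (fun q => ∏ ℓ, B (p ℓ) (q ℓ)) (p ∘ σ) := rfl
      _ = (stab p).card • ∑ q ∈ tuplesOf i, ∏ ℓ, B (p ℓ) (q ℓ) := h
      _ = ((stab p).card : ℝ) * ∑ q ∈ tuplesOf i, ∏ ℓ, B (p ℓ) (q ℓ) := by
          rw [nsmul_eq_mul]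
      _ = _ := by rw [card_stab_cast hp]
  rw [Finset.sum_congr rfl hinner, ← Finset.mul_sum]
  ring

lemma diag_prod_eq (μ : Fin n → ℝ) (p : Fin k → Fin n) (σ : Equiv.Perm (Fin k)) :
    (∏ ℓ, Matrix.diagonal μ (p ℓ) (p (σ ℓ)))
      = if p ∘ σ = p then (∏ ℓ, μ (p ℓ)) else 0 := by
  by_cases h : p ∘ σ = p
  · rw [if_pos h]
    refine Finset.prod_congr rfl fun ℓ _ => ?_
    have h2 : p (σ ℓ) = p ℓ := congrFun h ℓ
    rw [h2, Matrix.diagonal_apply_eq]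
  · rw [if_neg h]
    obtain ⟨ℓ, hℓ⟩ := Function.ne_iff.mp h
    exact Finset.prod_eq_zero (Finset.mem_univ ℓ)
      (Matrix.diagonal_apply_ne μ (Ne.symm hℓ))

lemma prod_mu_eq {μ : Fin n → ℝ} {i : Sym (Fin n) k} {p : Fin k → Fin n}
    (hp : p ∈ tuplesOf i) :
    (∏ ℓ, μ (p ℓ)) = ((i : Multiset (Fin n)).map μ).prod := by
  rw [← mem_tuplesOf.mp hp]
  rw [Multiset.map_coe, Multiset.prod_coe, List.map_ofFn, List.prod_ofFn]
  rfl

lemma sum_trace_tpow_diagonal (μ : Fin n → ℝ) :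
    ∑ σ : Equiv.Perm (Fin k), (tpow σ (Matrix.diagonal μ)).trace
      = ((Nat.factorial k) : ℝ) * ∑ i : Sym (Fin n) k, ((i : Multiset (Fin n)).map μ).prod := by
  simp_rw [trace_tpow]
  rw [Finset.sum_comm, sum_partition (fun p => ∑ σ : Equiv.Perm (Fin k), ∏ ℓ,
    Matrix.diagonal μ (p ℓ) (p (σ ℓ))), Finset.mul_sum]
  refine Finset.sum_congr rfl fun i _ => ?_
  have h0 : ((tuplesOf i).card : ℝ) ≠ 0 := by
    have := (tuplesOf_nonempty i).card_pos
    positivity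
  have hinner : ∀ p ∈ tuplesOf i, (∑ σ : Equiv.Perm (Fin k), ∏ ℓ,
      Matrix.diagonal μ (p ℓ) (p (σ ℓ)))
      = (((Nat.factorial k) : ℝ) * (((tuplesOf i).card : ℝ))⁻¹) * ((i : Multiset (Fin n)).map μ).prod := by
    intro p hp
    calc (∑ σ : Equiv.Perm (Fin k), ∏ ℓ, Matrix.diagonal μ (p ℓ) (p (σ ℓ)))
        = ∑ σ : Equiv.Perm (Fin k), if p ∘ σ = p then (∏ ℓ, μ (p ℓ)) else 0 := by
          exact Finset.sum_congr rfl fun σ _ => diag_prod_eq μ p σ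
      _ = ∑ σ ∈ stab p, (∏ ℓ, μ (p ℓ)) := (Finset.sum_filter _ _).symm
      _ = (stab p).card • (∏ ℓ, μ (p ℓ)) := Finset.sum_const _
      _ = ((stab p).card : ℝ) * (∏ ℓ, μ (p ℓ)) := by rw [nsmul_eq_mul]
      _ = _ := by rw [card_stab_cast hp, prod_mu_eq hp]
  rw [Finset.sum_congr rfl hinner, Finset.sum_const, nsmul_eq_mul]
  field_simp

lemma charpoly_conj {m : Type*} [DecidableEq m] [Fintype m] (U D V : Matrix m m ℝ)
    (hUV : U * V = 1) : (U * D * V).charpoly = D.charpoly := by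
  have hch : (U * D * V).charmatrix
      = U.map Polynomial.C * D.charmatrix * V.map Polynomial.C := by
    show Matrix.scalar m Polynomial.X - (Polynomial.C : ℝ →+* Polynomial ℝ).mapMatrix (U * D * V)
      = U.map Polynomial.C *
        (Matrix.scalar m Polynomial.X - (Polynomial.C : ℝ →+* Polynomial ℝ).mapMatrix D) *
        V.map Polynomial.C
    rw [Matrix.mul_sub, Matrix.sub_mul]
    congr 1
    · have hcomm := (Matrix.scalar_commute (n := m) Polynomial.X
        (fun r => Commute.all _ _) (U.map Polynomial.C)).eq
      have hone : (U.map Polynomial.C) * (V.map Polynomial.C) = 1 := by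
        rw [← Matrix.map_mul, hUV, Matrix.map_one _ (map_zero _) (map_one _)]
      rw [← hcomm, Matrix.mul_assoc, hone, Matrix.mul_one]
    · simp only [RingHom.mapMatrix_apply]
      rw [← Matrix.map_mul, ← Matrix.map_mul]
  unfold Matrix.charpoly
  rw [hch, Matrix.det_mul, Matrix.det_mul, mul_comm, ← mul_assoc, mul_comm (V.map _).det,
    ← Matrix.det_mul, ← Matrix.map_mul, hUV, Matrix.map_one _ (map_zero _) (map_one _),
    Matrix.det_one, one_mul]

open Polynomial in
lemma charpoly_diagonal (μ : Fin n → ℝ) :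
    (Matrix.diagonal μ).charpoly = ∏ s : Fin n, (X - C (μ s)) := by
  rw [Matrix.charpoly_of_upperTriangular _ (Matrix.blockTriangular_diagonal μ)]
  exact Finset.prod_congr rfl fun s _ => by rw [Matrix.diagonal_apply_eq]

open Polynomial in
lemma multiset_eq_of_prod_eq (lam μ : Fin n → ℝ)
    (h : (∏ s : Fin n, (X - C (lam s))) = ∏ s : Fin n, (X - C (μ s))) :
    (↑(List.ofFn lam) : Multiset ℝ) = ↑(List.ofFn μ) := by
  have key : ∀ f : Fin n → ℝ, ((Finset.univ.val.map f).map fun a => X - C a).prod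
      = ∏ s : Fin n, (X - C (f s)) := by
    intro f
    rw [Multiset.map_map, Finset.prod_eq_multiset_prod]
    rfl
  have h1 : Finset.univ.val.map lam = Finset.univ.val.map μ := by
    calc Finset.univ.val.map lam
        = ((Finset.univ.val.map lam).map fun a => X - C a).prod.roots := by
          rw [roots_multiset_prod_X_sub_C]
      _ = ((Finset.univ.val.map μ).map fun a => X - C a).prod.roots := by
          rw [key, key, h]
      _ = Finset.univ.val.map μ := roots_multiset_prod_X_sub_C _
  rwa [Fin.univ_val_map, Fin.univ_val_map] at h1

end SymPowAux

open Polynomial SymPowAux in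
/-- if the characteristic polynomial of a symmetric real matrix `A` splits as
`∏ (X - λ_s)`, then `trace(A^{⊙k}) = Σ_i ∏_{s∈i} λ_s`, the sum running over all multisets `i`
of size `k` over `{1,…,n}`; this is the complete homogeneous symmetric polynomial of degree
`k` in `λ_1,…,λ_n`. -/
theorem symPow_trace {n : ℕ} (k : ℕ) (hk : 1 ≤ k)
    (A : Matrix (Fin n) (Fin n) ℝ) (hA : ∀ a b, A a b = A b a) (lam : Fin n → ℝ)
    (hchar : A.charpoly = ∏ s : Fin n, (X - C (lam s))) :
    (symPow k A).trace = ∑ i : Sym (Fin n) k, ((i : Multiset (Fin n)).map lam).prod := by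
  classical
  have hHerm : A.IsHermitian := by
    ext a b
    simp only [Matrix.conjTranspose_apply, star_trivial]
    exact hA b a
  set U : Matrix (Fin n) (Fin n) ℝ := (hHerm.eigenvectorUnitary : Matrix (Fin n) (Fin n) ℝ)
    with hU
  set μ : Fin n → ℝ := hHerm.eigenvalues with hμ
  have hspec : A = U * Matrix.diagonal μ * star U := by
    have h := hHerm.spectral_theorem
    rwa [show RCLike.ofReal ∘ μ = μ by funext s; simp [RCLike.ofReal_real_eq_id]] at h
  have hUV : U * star U = 1 := Matrix.mem_unitaryGroup_iff.mp hHerm.eigenvectorUnitary.2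
  have hVU : star U * U = 1 := Matrix.mem_unitaryGroup_iff'.mp hHerm.eigenvectorUnitary.2
  have hcp : (∏ s : Fin n, (X - C (lam s))) = ∏ s : Fin n, (X - C (μ s)) := by
    rw [← hchar, hspec, charpoly_conj U (Matrix.diagonal μ) (star U) hUV, charpoly_diagonal]
  obtain ⟨π, hπ⟩ : ∃ π : Equiv.Perm (Fin n), lam ∘ π = μ :=
    exists_perm_comp (multiset_eq_of_prod_eq lam μ hcp)
  have hk' : ((Nat.factorial k) : ℝ) ≠ 0 := Nat.cast_ne_zero.2 (Nat.factorial_ne_zero k)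
  refine mul_left_cancel₀ hk' ?_
  calc ((Nat.factorial k) : ℝ) * (symPow k A).trace
      = ∑ σ : Equiv.Perm (Fin k), (tpow σ A).trace := factorial_mul_trace_symPow A
    _ = ∑ σ : Equiv.Perm (Fin k), (tpow σ (Matrix.diagonal μ)).trace := by
        refine Finset.sum_congr rfl fun σ _ => ?_
        rw [hspec]
        exact trace_tpow_conj hVU σ
    _ = ((Nat.factorial k) : ℝ) * ∑ i : Sym (Fin n) k, ((i : Multiset (Fin n)).map μ).prod :=
        sum_trace_tpow_diagonal μ
    _ = ((Nat.factorial k) : ℝ) * ∑ i : Sym (Fin n) k, ((i : Multiset (Fin n)).map lam).prod := by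
        congr 1
        refine Fintype.sum_equiv (Sym.equivCongr π) _ _ fun i => ?_
        show ((i : Multiset (Fin n)).map μ).prod
          = (((Sym.equivCongr π i : Sym (Fin n) k) : Multiset (Fin n)).map lam).prod
        have hcoe : ((Sym.equivCongr π i : Sym (Fin n) k) : Multiset (Fin n))
            = (i : Multiset (Fin n)).map π := rfl
        rw [hcoe, Multiset.map_map, show lam ∘ π = μ from hπ]
end

section
/- Let k ≥ 1. (a) If G is a connected, non-bipartite finite simple graph (undirected, loopless), then G^{⊙k} is connected. (b) For every connected finite undirected graph G (possibly with loops), the number of connected components of G^{⊙k} is at most 2^{k−1}. -/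
/-- Adjacency in the (unweighted) `k`-th symmetric tensor power of a graph given by an
adjacency relation `adj` on `V`: multisets `i` and `j` of size `k` are adjacent iff there are
`k`-tuples `p, q` with underlying multisets `i` and `j` such that `p ℓ` is adjacent to `q ℓ`
for every `ℓ`. -/
def symPowAdj {V : Type*} (adj : V → V → Prop) (k : ℕ) (i j : Sym V k) : Prop :=
  ∃ p q : Fin k → V,
    (↑(List.ofFn p) : Multiset V) = ↑i ∧ (↑(List.ofFn q) : Multiset V) = ↑j ∧
    ∀ ℓ : Fin k, adj (p ℓ) (q ℓ)

namespace SymPowAux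

open SimpleGraph

variable {V : Type}

/-- Tuple to symmetric power element. -/
def toSym {k : ℕ} (p : Fin k → V) : Sym V k :=
  ⟨(List.ofFn p : List V), by simp⟩

lemma reachable_of_step {adj : V → V → Prop} {k : ℕ} {p q : Fin k → V}
    (h : ∀ ℓ, adj (p ℓ) (q ℓ)) :
    (SimpleGraph.fromRel (symPowAdj adj k)).Reachable (toSym p) (toSym q) := by
  by_cases he : toSym p = (toSym q : Sym V k)
  · rw [he]
  · exact SimpleGraph.Adj.reachable ⟨he, Or.inl ⟨p, q, rfl, rfl, h⟩⟩

lemma reachable_of_chain {adj : V → V → Prop} {k : ℕ} (P : ℕ → Fin k → V) :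
    ∀ N : ℕ, (∀ n, n < N → ∀ ℓ, adj (P n ℓ) (P (n+1) ℓ)) →
    (SimpleGraph.fromRel (symPowAdj adj k)).Reachable (toSym (P 0)) (toSym (P N))
  | 0, _ => Reachable.refl _
  | (N+1), h => (reachable_of_chain P N fun n hn => h n (by omega)).trans
      (reachable_of_step (h N (by omega)))

lemma reach_of_fns {adj : V → V → Prop} {k : ℕ} (p q : Fin k → V) (N : ℕ)
    (h : ∀ ℓ, ∃ f : ℕ → V, f 0 = p ℓ ∧ f N = q ℓ ∧ ∀ n, n < N → adj (f n) (f (n+1))) :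
    (SimpleGraph.fromRel (symPowAdj adj k)).Reachable (toSym p) (toSym q) := by
  choose f h0 hN hstep using h
  have key := reachable_of_chain (adj := adj) (fun n ℓ => f ℓ n) N
    (fun n hn ℓ => hstep ℓ n hn)
  have e0 : (fun ℓ => f ℓ 0) = p := funext h0
  have eN : (fun ℓ => f ℓ N) = q := funext hN
  rw [← e0, ← eN]
  exact key

lemma exists_toSym {k : ℕ} (i : Sym V k) : ∃ p : Fin k → V, toSym p = i := by
  obtain ⟨s, hs⟩ := i
  obtain ⟨l, rfl⟩ : ∃ l : List V, (↑l : Multiset V) = s := ⟨s.toList, s.coe_toList⟩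
  have hl : l.length = k := by simpa using hs
  subst hl
  exact ⟨l.get, Subtype.ext (by simp [toSym, List.ofFn_get])⟩

variable {G0 : SimpleGraph V}

lemma exists_even_closed {v0 w0 : V} (e : G0.Adj v0 w0) (m : ℕ) :
    ∃ w : G0.Walk v0 v0, w.length = 2 * m := by
  induction m with
  | zero => exact ⟨.nil, rfl⟩
  | succ m ih =>
    obtain ⟨w, hw⟩ := ih
    exact ⟨.cons e (.cons e.symm w), by simp [hw]; ring⟩

lemma exists_walk_length_eq {x v0 w0 : V} (e : G0.Adj v0 w0)
    (w : G0.Walk x v0) {N : ℕ} (hN : w.length ≤ N) :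
    ∃ (y : V) (w' : G0.Walk x y), w'.length = N ∧ (y = v0 ∨ y = w0) ∧
      (Even (N - w.length) → y = v0) := by
  rcases Nat.even_or_odd (N - w.length) with hp | hp
  · obtain ⟨m, hm⟩ := hp
    obtain ⟨c, hc⟩ := exists_even_closed e m
    exact ⟨v0, w.append c, by simp [hc]; omega, Or.inl rfl, fun _ => rfl⟩
  · obtain ⟨m, hm⟩ := hp
    obtain ⟨c, hc⟩ := exists_even_closed e m
    refine ⟨w0, (w.append c).append (.cons e .nil), by simp [hc]; omega, Or.inr rfl,
      fun h => by obtain ⟨r, hr⟩ := h; omega⟩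

lemma exists_walk_length_eq' {x v0 : V} {ow : G0.Walk v0 v0} (how : Odd ow.length)
    {w0 : V} (e : G0.Adj v0 w0)
    (w : G0.Walk x v0) {N : ℕ} (hN : w.length + ow.length ≤ N) :
    ∃ w' : G0.Walk x v0, w'.length = N := by
  rcases Nat.even_or_odd (N - w.length) with hp | hp
  · obtain ⟨m, hm⟩ := hp
    obtain ⟨c, hc⟩ := exists_even_closed e m
    exact ⟨w.append c, by simp [hc]; omega⟩
  · have hp2 : Even (N - w.length - ow.length) := by
      obtain ⟨a, ha⟩ := hp
      obtain ⟨b, hb⟩ := how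
      refine ⟨a - b, by omega⟩
    obtain ⟨m, hm⟩ := hp2
    obtain ⟨c, hc⟩ := exists_even_closed e m
    obtain ⟨b, hb⟩ := how
    exact ⟨(w.append ow).append c, by simp [hc]; omega⟩

lemma reach_canonical {adj : V → V → Prop} {k : ℕ}
    (hA : ∀ a b : V, G0.Adj a b → adj a b) (hG : G0.Preconnected)
    {v0 w0 : V} (e : G0.Adj v0 w0) (p : Fin k → V) (i0 : Fin k) :
    ∃ q : Fin k → V, q i0 = v0 ∧ (∀ ℓ, q ℓ = v0 ∨ q ℓ = w0) ∧
      (SimpleGraph.fromRel (symPowAdj adj k)).Reachable (toSym p) (toSym q) := by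
  classical
  have W : ∀ ℓ : Fin k, G0.Walk (p ℓ) v0 := fun ℓ => (hG (p ℓ) v0).some
  set N : ℕ := (W i0).length + 2 * (∑ ℓ, (W ℓ).length) with hNdef
  have hdle : ∀ ℓ, (W ℓ).length ≤ ∑ j, (W j).length := fun ℓ =>
    Finset.single_le_sum (f := fun j => (W j).length) (fun _ _ => Nat.zero_le _)
      (Finset.mem_univ ℓ)
  have key : ∀ ℓ, ∃ y : V, (y = v0 ∨ y = w0) ∧ (ℓ = i0 → y = v0) ∧
      ∃ f : ℕ → V, f 0 = p ℓ ∧ f N = y ∧ ∀ n, n < N → adj (f n) (f (n+1)) := by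
    intro ℓ
    have hle : (W ℓ).length ≤ N := by have := hdle ℓ; omega
    obtain ⟨y, w', hw', hy, hev⟩ := exists_walk_length_eq e (W ℓ) hle
    refine ⟨y, hy, ?_, w'.getVert, w'.getVert_zero,
      by rw [← hw']; exact w'.getVert_length, ?_⟩
    · rintro rfl
      exact hev ⟨∑ j, (W j).length, by omega⟩
    · intro n hn
      exact hA _ _ (w'.adj_getVert_succ (by omega))
  choose q hy hi0 hf using key
  exact ⟨q, hi0 i0 rfl, hy, reach_of_fns p q N hf⟩

lemma reach_const {adj : V → V → Prop} {k : ℕ}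
    (hA : ∀ a b : V, G0.Adj a b → adj a b) (hG : G0.Preconnected)
    {v0 : V} (ow : G0.Walk v0 v0) (how : Odd ow.length) (p : Fin k → V) :
    (SimpleGraph.fromRel (symPowAdj adj k)).Reachable (toSym p) (toSym fun _ => v0) := by
  classical
  have hpos : 0 < ow.length := by obtain ⟨b, hb⟩ := how; omega
  have e : G0.Adj v0 (ow.getVert 1) := by
    have := ow.adj_getVert_succ (i := 0) hpos
    simpa using this
  have W : ∀ ℓ : Fin k, G0.Walk (p ℓ) v0 := fun ℓ => (hG (p ℓ) v0).some
  set N : ℕ := ow.length + 2 * (∑ ℓ, (W ℓ).length) with hNdef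
  have hdle : ∀ j : Fin k, (W j).length ≤ ∑ j, (W j).length := fun j =>
    Finset.single_le_sum (f := fun j => (W j).length) (fun _ _ => Nat.zero_le _)
      (Finset.mem_univ j)
  refine reach_of_fns _ _ N ?_
  intro ℓ
  have hle : (W ℓ).length + ow.length ≤ N := by have := hdle ℓ; omega
  obtain ⟨w', hw'⟩ := exists_walk_length_eq' how e (W ℓ) hle
  exact ⟨w'.getVert, w'.getVert_zero, by rw [← hw']; exact w'.getVert_length,
    fun n hn => hA _ _ (w'.adj_getVert_succ (by omega))⟩

lemma exists_odd_closed {G : SimpleGraph V} (hG : G.Connected) (hnc : ¬ G.Colorable 2) :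
    ∃ (v0 : V) (w : G.Walk v0 v0), Odd w.length := by
  have hne : Nonempty V := hG.nonempty
  obtain ⟨v0⟩ := hne
  refine ⟨v0, ?_⟩
  by_contra hodd
  push_neg at hodd
  apply hnc
  have wch : ∀ u, G.Walk v0 u := fun u => (hG.preconnected v0 u).some
  refine ⟨SimpleGraph.Coloring.mk (fun u => (⟨(wch u).length % 2, by omega⟩ : Fin 2)) ?_⟩
  intro u v huv hcol
  have hcl := hodd ((wch u).append (.cons huv (wch v).reverse))
  rw [Nat.odd_iff] at hcl
  simp only [Walk.length_append, Walk.length_cons, Walk.length_reverse] at hcl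
  have hval : (wch u).length % 2 = (wch v).length % 2 := by
    have := congrArg Fin.val hcol
    simpa using this
  omega

lemma count_ofFn [DecidableEq V] {k : ℕ} (f : Fin k → V) (a : V) :
    Multiset.count a (↑(List.ofFn f) : Multiset V) =
      (Finset.univ.filter (fun ℓ => f ℓ = a)).card := by
  classical
  rw [List.ofFn_eq_map]
  rw [← Multiset.map_coe]
  rw [Multiset.count_map]
  rw [show ((List.finRange k : List (Fin k)) : Multiset (Fin k)) =
    (Finset.univ : Finset (Fin k)).val from rfl]
  rw [Finset.card, Finset.filter_val]
  congr 1
  exact Multiset.filter_congr (fun x _ => eq_comm)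

lemma card_filter_lt {k t : ℕ} (ht : t ≤ k) :
    (Finset.univ.filter (fun ℓ : Fin k => (ℓ : ℕ) < t)).card = t := by
  rw [Finset.card_filter]
  rw [Fin.sum_univ_eq_sum_range (fun i => if i < t then 1 else 0)]
  rw [← Finset.card_filter]
  have h : (Finset.range k).filter (fun i => i < t) = Finset.range t := by
    ext i; simp; omega
  rw [h, Finset.card_range]

lemma canonical_eq [DecidableEq V] {k : ℕ} {v0 w0 : V} (hne : v0 ≠ w0)
    (q : Fin k → V) (hval : ∀ ℓ, q ℓ = v0 ∨ q ℓ = w0) :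
    toSym q = toSym (fun ℓ : Fin k =>
      if (ℓ : ℕ) < (Finset.univ.filter (fun ℓ => q ℓ = w0)).card then w0 else v0) := by
  set t := (Finset.univ.filter (fun ℓ => q ℓ = w0)).card with htdef
  have htk : t ≤ k := by
    calc t ≤ Finset.univ.card := Finset.card_filter_le _ _
    _ = k := by simp
  have hfw : (Finset.univ.filter (fun ℓ : Fin k => (if (ℓ:ℕ) < t then w0 else v0) = w0)) =
      (Finset.univ.filter (fun ℓ : Fin k => (ℓ:ℕ) < t)) := by
    ext ℓ
    simp only [Finset.mem_filter, Finset.mem_univ, true_and]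
    constructor
    · intro h
      by_contra hc
      rw [if_neg hc] at h
      exact hne h
    · intro h; rw [if_pos h]
  apply Subtype.ext
  show (↑(List.ofFn q) : Multiset V) =
    ↑(List.ofFn (fun ℓ : Fin k => if (ℓ : ℕ) < t then w0 else v0))
  apply Multiset.ext.mpr
  intro a
  rw [count_ofFn, count_ofFn]
  by_cases haw : a = w0
  · simp only [haw]
    rw [hfw, card_filter_lt htk, htdef]
  · by_cases hav : a = v0
    · simp only [hav]
      have h1 : (Finset.univ.filter (fun ℓ => q ℓ = v0)) =
          (Finset.univ.filter (fun ℓ => q ℓ = w0))ᶜ := by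
        ext ℓ
        simp only [Finset.mem_filter, Finset.mem_univ, true_and, Finset.mem_compl]
        constructor
        · intro h hc
          rw [h] at hc; exact hne hc
        · intro h
          rcases hval ℓ with h' | h'
          · exact h'
          · exact absurd h' h
      have h2 : (Finset.univ.filter (fun ℓ : Fin k => (if (ℓ:ℕ) < t then w0 else v0) = v0)) =
          (Finset.univ.filter (fun ℓ : Fin k => (ℓ:ℕ) < t))ᶜ := by
        ext ℓ
        simp only [Finset.mem_filter, Finset.mem_univ, true_and, Finset.mem_compl]
        constructor
        · intro h hc
          rw [if_pos hc] at h
          exact hne h.symm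
        · intro h
          rw [if_neg h]
      rw [h1, h2, Finset.card_compl, Finset.card_compl, card_filter_lt htk, ← htdef]
    · have h1 : (Finset.univ.filter (fun ℓ => q ℓ = a)) = ∅ := by
        apply Finset.filter_eq_empty_iff.mpr
        intro ℓ _
        rcases hval ℓ with h' | h' <;> rw [h'] <;> tauto
      have h2 : (Finset.univ.filter (fun ℓ : Fin k => (if (ℓ:ℕ) < t then w0 else v0) = a)) = ∅ := by
        apply Finset.filter_eq_empty_iff.mpr
        intro ℓ _
        by_cases hc : (ℓ:ℕ) < t
        · rw [if_pos hc]; tauto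
        · rw [if_neg hc]; tauto
      rw [h1, h2]

end SymPowAux

open SymPowAux SimpleGraph

/-- for `k ≥ 1`: (a) if `G` is a connected non-bipartite finite simple graph,
then `G^{⊙k}` is connected; (b) for every connected finite undirected graph `G` (possibly
with loops, connectivity being taken of the underlying loopless graph), `G^{⊙k}` has at most
`2^{k−1}` connected components. -/
theorem symPow_components_bound (k : ℕ) (hk : 1 ≤ k) :
    (∀ (V : Type) [Fintype V] (G : SimpleGraph V), G.Connected → ¬ G.Colorable 2 →
      (SimpleGraph.fromRel (symPowAdj G.Adj k)).Connected) ∧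
    (∀ (V : Type) [Fintype V] (adj : V → V → Prop), Symmetric adj →
      (SimpleGraph.fromRel adj).Connected →
      Nat.card (SimpleGraph.fromRel (symPowAdj adj k)).ConnectedComponent ≤ 2 ^ (k - 1)) := by
  constructor
  · -- part (a)
    intro V _ G hconn hnc
    obtain ⟨v0, ow, how⟩ := exists_odd_closed hconn hnc
    have hA : ∀ a b : V, G.Adj a b → G.Adj a b := fun _ _ h => h
    have hne : Nonempty (Sym V k) := ⟨toSym fun _ => v0⟩
    constructor
    · intro i j
      obtain ⟨p, rfl⟩ := exists_toSym i
      obtain ⟨q, rfl⟩ := exists_toSym j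
      exact (reach_const hA hconn.preconnected ow how p).trans
        (reach_const hA hconn.preconnected ow how q).symm
  · -- part (b)
    intro V _ adj hsym hconn
    classical
    by_cases hV : ∃ x y : V, x ≠ y
    · obtain ⟨x, y, hxy⟩ := hV
      obtain ⟨w⟩ := hconn.preconnected x y
      have hedge : ∃ v0 w0 : V, (SimpleGraph.fromRel adj).Adj v0 w0 := by
        cases w with
        | nil => exact absurd rfl hxy
        | cons h _ => exact ⟨_, _, h⟩
      obtain ⟨v0, w0, e⟩ := hedge
      have hvw : v0 ≠ w0 := e.ne
      have hA : ∀ a b : V, (SimpleGraph.fromRel adj).Adj a b → adj a b := by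
        intro a b hab
        rcases hab.2 with h | h
        · exact h
        · exact hsym h
      set H := SimpleGraph.fromRel (symPowAdj adj k) with hH
      have hsurj : Function.Surjective (fun t : Fin k =>
          H.connectedComponentMk
            (toSym (fun ℓ : Fin k => if (ℓ:ℕ) < (t:ℕ) then w0 else v0))) := by
        intro c
        obtain ⟨i, rfl⟩ := c.exists_rep
        obtain ⟨p, rfl⟩ := exists_toSym i
        obtain ⟨q, hq0, hqv, hreach⟩ :=
          reach_canonical hA hconn.preconnected e p ⟨0, by omega⟩
        have htk : (Finset.univ.filter (fun ℓ => q ℓ = w0)).card < k := by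
          have h2 : (Finset.univ.filter (fun ℓ => q ℓ = w0)).card < Fintype.card (Fin k) := by
            apply (Finset.card_lt_iff_ne_univ _).mpr
            intro huniv
            have hmem : (⟨0, by omega⟩ : Fin k) ∈
                Finset.univ.filter (fun ℓ => q ℓ = w0) := by
              rw [huniv]; exact Finset.mem_univ _
            rw [Finset.mem_filter] at hmem
            exact hvw (hq0 ▸ hmem.2 : v0 = w0)
          simpa using h2
        refine ⟨⟨(Finset.univ.filter (fun ℓ => q ℓ = w0)).card, htk⟩, ?_⟩
        have heq := canonical_eq hvw q hqv
        dsimp only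
        rw [← heq]
        exact (ConnectedComponent.sound hreach).symm
      calc Nat.card H.ConnectedComponent ≤ Nat.card (Fin k) :=
            Nat.card_le_card_of_surjective _ hsurj
        _ = k := by simp
        _ ≤ 2 ^ (k-1) := by
            have := Nat.lt_two_pow_self (n := k-1)
            omega
    · have hsub : Subsingleton V := ⟨fun a b => by
        by_contra h; exact hV ⟨a, b, h⟩⟩
      obtain ⟨v⟩ := hconn.nonempty
      have hsymsub : Subsingleton (Sym V k) := by
        constructor
        intro i j
        apply Subtype.ext
        have hi : (i : Multiset V) = Multiset.replicate k v := by
          rw [Multiset.eq_replicate]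
          exact ⟨i.2, fun b _ => Subsingleton.elim b v⟩
        have hj : (j : Multiset V) = Multiset.replicate k v := by
          rw [Multiset.eq_replicate]
          exact ⟨j.2, fun b _ => Subsingleton.elim b v⟩
        exact hi.trans hj.symm
      have hcs : Subsingleton (SimpleGraph.fromRel (symPowAdj adj k)).ConnectedComponent := by
        constructor
        intro a b
        obtain ⟨u, rfl⟩ := a.exists_rep
        obtain ⟨w, rfl⟩ := b.exists_rep
        rw [Subsingleton.elim u w]
      calc Nat.card (SimpleGraph.fromRel (symPowAdj adj k)).ConnectedComponent = 1 :=
            @Nat.card_of_subsingleton _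
              ((SimpleGraph.fromRel (symPowAdj adj k)).connectedComponentMk
                (toSym fun _ => v)) hcs
        _ ≤ 2 ^ (k-1) := Nat.one_le_two_pow
end
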